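/- Let X_1, …, X_s be linearly ordered sets, each chosen so that between any two of its elements (and below its minimum-candidates and above its maximum-candidates) there are at least r elements of a superset X_i' ⊇ X_i. Suppose a property P holds of all tuples (a_{i_1 j_1}, …, a_{i_n j_n}) extracted from increasing r-tuples a_i ∈ [X_1']^r × … × [X_s']^r at fixed index positions (i_1,j_1),…,(i_n,j_n). Then for any 'equivalent' index pattern (i_1,l_1),…,(i_n,l_n) (same first coordinates, arbitrary second coordinates ≤ r), P holds of all tuples extracted from [X_1]^r × … × [X_s]^r at the new positions. -/

import Mathlib

theorem extend_mono {α : Type} [LinearOrder α] {r : ℕ} {Y Y' : Set α}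
    (hYY : Y ⊆ Y')
    (hbetween : ∀ y1 ∈ Y, ∀ y2 ∈ Y, y1 < y2 →
      ∃ t : Finset α, r ≤ t.card ∧ ∀ x ∈ t, x ∈ Y' ∧ y1 < x ∧ x < y2)
    (hbelow : ∀ y ∈ Y, ∃ t : Finset α, r ≤ t.card ∧ ∀ x ∈ t, x ∈ Y' ∧ x < y)
    (habove : ∀ y ∈ Y, ∃ t : Finset α, r ≤ t.card ∧ ∀ x ∈ t, x ∈ Y' ∧ y < x)
    (y0 : α) (hy0 : y0 ∈ Y)
    {m : ℕ} (v : Fin m → α) (hv : StrictMono v) (hvY : ∀ t, v t ∈ Y)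
    (p : Fin m → Fin r) (hp : StrictMono p) :
    ∃ b : Fin r → α, StrictMono b ∧ (∀ u, b u ∈ Y') ∧ ∀ t, b (p t) = v t := by
  classical
  cases m with
  | zero =>
      obtain ⟨T, hTc, hT⟩ := hbelow y0 hy0
      refine ⟨fun u => T.orderEmbOfCardLe hTc u, ?_, ?_, fun t => t.elim0⟩
      · exact fun u u' h => (T.orderEmbOfCardLe hTc).strictMono h
      · exact fun u => (hT _ (T.orderEmbOfCardLe_mem hTc u)).1
  | succ m' =>
      obtain ⟨T0, hT0c, hT0⟩ := hbelow (v 0) (hvY 0)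
      obtain ⟨T1, hT1c, hT1⟩ := habove (v (Fin.last m')) (hvY _)
      have H : ∀ t : Fin m', ∃ T : Finset α, r ≤ T.card ∧
          ∀ x ∈ T, x ∈ Y' ∧ v t.castSucc < x ∧ x < v t.succ :=
        fun t => hbetween _ (hvY _) _ (hvY _) (hv (Fin.castSucc_lt_succ : t.castSucc < t.succ))
      choose T hTc hT using H
      set b : Fin r → α := fun u =>
        if h : ∃ t, p t = u then v h.choose
        else if h2 : ∃ t : Fin m', p t.castSucc < u ∧ u < p t.succ then
          (T h2.choose).orderEmbOfCardLe (hTc h2.choose) u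
        else if u < p 0 then T0.orderEmbOfCardLe hT0c u
        else T1.orderEmbOfCardLe hT1c u with hbdef
      -- trichotomy
      have tri : ∀ u : Fin r, (¬ ∃ t, p t = u) →
          (¬ ∃ t : Fin m', p t.castSucc < u ∧ u < p t.succ) →
          ¬ (u < p 0) → p (Fin.last m') < u := by
        intro u h1 h2 h3
        have h0 : p 0 < u :=
          lt_of_le_of_ne (not_lt.1 h3) (fun he => h1 ⟨0, he⟩)
        set sfilt : Finset (Fin (m' + 1)) :=
          Finset.univ.filter (fun t => p t < u) with hsf
        have hne : sfilt.Nonempty :=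
          ⟨0, by simp [hsf, h0]⟩
        set ts := sfilt.max' hne with hts
        have htsmem : ts ∈ sfilt := sfilt.max'_mem hne
        have htslt : p ts < u := by
          have := Finset.mem_filter.1 htsmem
          exact this.2
        by_cases hlast : ts = Fin.last m'
        · rw [← hlast]; exact htslt
        · exfalso
          have hvlt : ts.val < m' := by
            have := ts.isLt
            have : ts.val ≠ m' := fun he => hlast (Fin.ext he)
            omega
          set tt : Fin m' := ⟨ts.val, hvlt⟩ with htt
          have hcs : tt.castSucc = ts := Fin.ext rfl
          have hsuccnot : tt.succ ∉ sfilt := by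
            intro hmem
            have hle := sfilt.le_max' _ hmem
            rw [← hts] at hle
            have : ts < tt.succ := by
              rw [Fin.lt_def]
              simp [htt]
            exact absurd (lt_of_lt_of_le this hle) (lt_irrefl _)
          have hup : u < p tt.succ := by
            have h4 : ¬ p tt.succ < u := by
              intro hh
              exact hsuccnot (Finset.mem_filter.2 ⟨Finset.mem_univ _, hh⟩)
            have h5 : p tt.succ ≠ u := fun he => h1 ⟨_, he⟩
            exact lt_of_le_of_ne (not_lt.1 h4) (Ne.symm h5)
          exact h2 ⟨tt, by rw [hcs]; exact htslt, hup⟩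
      have hcases : ∀ u : Fin r,
          (∃ t, p t = u ∧ b u = v t) ∨
          (∃ t : Fin m', p t.castSucc < u ∧ u < p t.succ ∧
            b u = (T t).orderEmbOfCardLe (hTc t) u) ∨
          (u < p 0 ∧ b u = T0.orderEmbOfCardLe hT0c u) ∨
          (p (Fin.last m') < u ∧ b u = T1.orderEmbOfCardLe hT1c u) := by
        intro u
        by_cases h : ∃ t, p t = u
        · exact Or.inl ⟨h.choose, h.choose_spec, by simp only [hbdef]; rw [dif_pos h]⟩
        · by_cases h2 : ∃ t : Fin m', p t.castSucc < u ∧ u < p t.succ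
          · exact Or.inr (Or.inl ⟨h2.choose, h2.choose_spec.1, h2.choose_spec.2,
              by simp only [hbdef]; rw [dif_neg h, dif_pos h2]⟩)
          · by_cases h3 : u < p 0
            · exact Or.inr (Or.inr (Or.inl ⟨h3,
                by simp only [hbdef]; rw [dif_neg h, dif_neg h2, if_pos h3]⟩))
            · exact Or.inr (Or.inr (Or.inr ⟨tri u h h2 h3,
                by simp only [hbdef]; rw [dif_neg h, dif_neg h2, if_neg h3]⟩))
      have hTmem : ∀ (t : Fin m') (u : Fin r),
          (T t).orderEmbOfCardLe (hTc t) u ∈ T t :=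
        fun t u => Finset.orderEmbOfCardLe_mem _ _ _
      have claimC : ∀ t, b (p t) = v t := by
        intro t
        rcases hcases (p t) with ⟨t', ht', hb⟩ | ⟨t', h1, h2, hb⟩ | ⟨h1, hb⟩ | ⟨h1, hb⟩
        · rw [hb]; exact congrArg v (hp.injective ht')
        · exfalso
          have e1 : t'.castSucc < t := hp.lt_iff_lt.1 h1
          have e2 : t < t'.succ := hp.lt_iff_lt.1 h2
          rw [Fin.lt_def] at e1 e2
          simp at e1 e2
          omega
        · exact absurd (hp.lt_iff_lt.1 h1) (by simp [Fin.lt_def])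
        · exact absurd (hp.lt_iff_lt.1 h1)
            (not_lt.2 (Fin.le_last t))
      have claimB : ∀ (t : Fin (m' + 1)) (u : Fin r), u < p t → b u < v t := by
        intro t u hu
        rcases hcases u with ⟨t', ht', hb⟩ | ⟨t', h1, h2, hb⟩ | ⟨h1, hb⟩ | ⟨h1, hb⟩
        · rw [hb]
          exact hv (hp.lt_iff_lt.1 (ht' ▸ hu))
        · rw [hb]
          have hb1 : (T t').orderEmbOfCardLe (hTc t') u < v t'.succ :=
            (hT t' _ (hTmem t' u)).2.2
          have hle : t'.succ ≤ t := by
            have := hp.lt_iff_lt.1 (lt_trans h1 hu)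
            rw [Fin.lt_def] at this
            rw [Fin.le_def]
            simp at this ⊢
            omega
          exact lt_of_lt_of_le hb1 (hv.monotone hle)
        · rw [hb]
          exact lt_of_lt_of_le ((hT0 _ (Finset.orderEmbOfCardLe_mem _ _ _)).2)
            (hv.monotone (Fin.zero_le t))
        · exact absurd (lt_trans h1 hu)
            (not_lt.2 (hp.monotone (Fin.le_last t)))
      have claimBle : ∀ (t : Fin (m' + 1)) (u : Fin r), u ≤ p t → b u ≤ v t := by
        intro t u hu
        rcases lt_or_eq_of_le hu with h | h
        · exact le_of_lt (claimB t u h)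
        · exact le_of_eq (h ▸ claimC t)
      have claimA : ∀ (t : Fin (m' + 1)) (u : Fin r), p t < u → v t < b u := by
        intro t u hu
        rcases hcases u with ⟨t', ht', hb⟩ | ⟨t', h1, h2, hb⟩ | ⟨h1, hb⟩ | ⟨h1, hb⟩
        · rw [hb]
          exact hv (hp.lt_iff_lt.1 (ht' ▸ hu))
        · rw [hb]
          have hb1 : v t'.castSucc < (T t').orderEmbOfCardLe (hTc t') u :=
            (hT t' _ (hTmem t' u)).2.1
          have hle : t ≤ t'.castSucc := by
            have := hp.lt_iff_lt.1 (lt_trans hu h2)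
            rw [Fin.lt_def] at this
            rw [Fin.le_def]
            simp at this ⊢
            omega
          exact lt_of_le_of_lt (hv.monotone hle) hb1
        · exact absurd (lt_trans hu h1)
            (not_lt.2 (hp.monotone (Fin.zero_le t)))
        · rw [hb]
          exact lt_of_le_of_lt (hv.monotone (Fin.le_last t))
            ((hT1 _ (Finset.orderEmbOfCardLe_mem _ _ _)).2)
      have hmono : StrictMono b := by
        intro u u' huu
        rcases hcases u' with ⟨t, ht, hb'⟩ | ⟨t, h1, h2, hb'⟩ | ⟨h1, hb'⟩ | ⟨h1, hb'⟩
        · rw [hb']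
          exact claimB t u (ht ▸ huu)
        · by_cases hle : u ≤ p t.castSucc
          · rw [hb']
            exact lt_of_le_of_lt (claimBle _ u hle) (hT t _ (hTmem t u')).2.1
          · push_neg at hle
            rcases hcases u with ⟨t'', ht'', hb⟩ | ⟨t'', h1', h2', hb⟩ | ⟨h1', hb⟩ | ⟨h1', hb⟩
            · exfalso
              have e1 : t.castSucc < t'' := hp.lt_iff_lt.1 (ht'' ▸ hle)
              have e2 : t'' < t.succ := hp.lt_iff_lt.1 (ht'' ▸ lt_trans huu h2)
              rw [Fin.lt_def] at e1 e2
              simp at e1 e2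
              omega
            · have : t'' = t := by
                have e1 : t''.castSucc < t.succ := hp.lt_iff_lt.1 (lt_trans h1' (lt_trans huu h2))
                have e2 : t.castSucc < t''.succ := hp.lt_iff_lt.1 (lt_trans hle h2')
                rw [Fin.lt_def] at e1 e2
                simp at e1 e2
                exact Fin.ext (by omega)
              subst this
              rw [hb, hb']
              exact ((T t'').orderEmbOfCardLe (hTc t'')).strictMono huu
            · exact absurd (lt_trans h1' (lt_of_le_of_lt (hp.monotone (Fin.zero_le t.castSucc)) hle))
                (lt_irrefl _)
            · exact absurd (lt_trans (lt_trans h1' huu) h2)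
                (not_lt.2 (hp.monotone (Fin.le_last _)))
        · rcases hcases u with ⟨t'', ht'', hb⟩ | ⟨t'', h1', h2', hb⟩ | ⟨h1', hb⟩ | ⟨h1', hb⟩
          · exact absurd (hp.lt_iff_lt.1 (ht'' ▸ (lt_trans huu h1)))
              (by simp [Fin.lt_def])
          · exact absurd (lt_trans h1' (lt_trans huu h1))
              (not_lt.2 (hp.monotone (Fin.zero_le _)))
          · rw [hb, hb']
            exact (T0.orderEmbOfCardLe hT0c).strictMono huu
          · exact absurd (lt_trans h1' (lt_trans huu h1))
              (not_lt.2 (hp.monotone (Fin.zero_le _)))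
        · by_cases hle : u ≤ p (Fin.last m')
          · rw [hb']
            exact lt_of_le_of_lt (claimBle _ u hle)
              ((hT1 _ (Finset.orderEmbOfCardLe_mem _ _ _)).2)
          · push_neg at hle
            rcases hcases u with ⟨t'', ht'', hb⟩ | ⟨t'', h1', h2', hb⟩ | ⟨h1', hb⟩ | ⟨h1', hb⟩
            · exact absurd (ht'' ▸ hle) (not_lt.2 (hp.monotone (Fin.le_last _)))
            · exact absurd (lt_trans hle h2') (not_lt.2 (hp.monotone (Fin.le_last _)))
            · exact absurd (lt_trans hle h1') (not_lt.2 (hp.monotone (Fin.zero_le _)))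
            · rw [hb, hb']
              exact (T1.orderEmbOfCardLe hT1c).strictMono huu
      have hmem : ∀ u, b u ∈ Y' := by
        intro u
        rcases hcases u with ⟨t, ht, hb⟩ | ⟨t, h1, h2, hb⟩ | ⟨h1, hb⟩ | ⟨h1, hb⟩
        · rw [hb]; exact hYY (hvY t)
        · rw [hb]; exact (hT t _ (hTmem t u)).1
        · rw [hb]; exact (hT0 _ (Finset.orderEmbOfCardLe_mem _ _ _)).1
        · rw [hb]; exact (hT1 _ (Finset.orderEmbOfCardLe_mem _ _ _)).1
      exact ⟨b, hmono, hmem, claimC⟩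



/-- The combinatorial lemma on equivalent index patterns.  Let `X i ⊆ X' i` be subsets
of a linear order arranged in increasing blocks, such that between any two elements of
`X i`, below any element of `X i`, and above any element of `X i` there are at least `r`
elements of `X' i` (the condition `X i ∈ (X' i)^{••}`).  If a property `P` holds of all
tuples extracted at index positions `(i_1,j_1),…,(i_n,j_n)` from all tuples of strictly
increasing `r`-tuples through `X'_1 × … × X'_s`, then for any equivalent index pattern
`(i_1,l_1),…,(i_n,l_n)` (same first coordinates), `P` holds of all tuples extracted at
the new positions from tuples of strictly increasing `r`-tuples through
`X_1 × … × X_s`. -/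
theorem stmt19 (α : Type) [LinearOrder α] (s r n : ℕ)
    (X X' : Fin s → Set α)
    (hsub : ∀ i, X i ⊆ X' i)
    (hblocks : ∀ i i' : Fin s, i < i' → ∀ x ∈ X' i, ∀ y ∈ X' i', x < y)
    (hbetween : ∀ i, ∀ y1 ∈ X i, ∀ y2 ∈ X i, y1 < y2 →
      ∃ t : Finset α, r ≤ t.card ∧ ∀ x ∈ t, x ∈ X' i ∧ y1 < x ∧ x < y2)
    (hbelow : ∀ i, ∀ y ∈ X i, ∃ t : Finset α, r ≤ t.card ∧ ∀ x ∈ t, x ∈ X' i ∧ x < y)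
    (habove : ∀ i, ∀ y ∈ X i, ∃ t : Finset α, r ≤ t.card ∧ ∀ x ∈ t, x ∈ X' i ∧ y < x)
    (P : (Fin n → α) → Prop)
    (idx : Fin n → Fin s) (j l : Fin n → Fin r)
    (hjl : ∀ k k' : Fin n, k < k' →
      idx k < idx k' ∨ (idx k = idx k' ∧ j k < j k'))
    (hll : ∀ k k' : Fin n, k < k' →
      idx k < idx k' ∨ (idx k = idx k' ∧ l k < l k'))
    (hP : ∀ a : Fin s → Fin r → α,
      (∀ i, StrictMono (a i)) → (∀ i k, a i k ∈ X' i) →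
      P (fun k => a (idx k) (j k))) :
    ∀ a : Fin s → Fin r → α,
      (∀ i, StrictMono (a i)) → (∀ i k, a i k ∈ X i) →
      P (fun k => a (idx k) (l k)) := by
  classical
  intro a ha haX
  rcases Nat.eq_zero_or_pos r with hr | hr
  · subst hr
    have h1 : ∀ i (k : Fin 0), a i k ∈ X' i := fun _ k => k.elim0
    have h2 := hP a ha h1
    have heq : (fun k => a (idx k) (j k)) = fun k => a (idx k) (l k) :=
      funext fun k => (j k).elim0
    rw [heq] at h2
    exact h2
  · set S : Fin s → Finset (Fin n) :=
      fun i => Finset.univ.filter (fun k => idx k = i) with hS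
    have key : ∀ i : Fin s, ∃ b : Fin r → α, StrictMono b ∧ (∀ u, b u ∈ X' i) ∧
        ∀ t : Fin (S i).card,
          b (j ((S i).orderIsoOfFin rfl t : Fin n)) =
            a i (l ((S i).orderIsoOfFin rfl t : Fin n)) := by
      intro i
      have hmemS : ∀ k : Fin n, k ∈ S i → idx k = i := by
        intro k hk
        simp only [hS, Finset.mem_filter] at hk
        exact hk.2
      set e := (S i).orderIsoOfFin rfl with he_def
      have he : ∀ t, idx (e t : Fin n) = i := fun t => hmemS _ (e t).2
      have hlt : ∀ t t' : Fin (S i).card, t < t' → ((e t : Fin n) < (e t' : Fin n)) :=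
        fun t t' h => Subtype.coe_lt_coe.2 (e.strictMono h)
      have hpmono : StrictMono (fun t : Fin (S i).card => j (e t : Fin n)) := by
        intro t t' h
        rcases hjl _ _ (hlt t t' h) with h' | h'
        · rw [he t, he t'] at h'; exact absurd h' (lt_irrefl _)
        · exact h'.2
      have hvmono : StrictMono (fun t : Fin (S i).card => a i (l (e t : Fin n))) := by
        intro t t' h
        rcases hll _ _ (hlt t t' h) with h' | h'
        · rw [he t, he t'] at h'; exact absurd h' (lt_irrefl _)
        · exact ha i h'.2
      exact extend_mono (hsub i) (hbetween i) (hbelow i) (habove i)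
        (a i ⟨0, hr⟩) (haX i ⟨0, hr⟩)
        _ hvmono (fun t => haX i _) _ hpmono
    choose b hb1 hb2 hb3 using key
    have hfin := hP b hb1 hb2
    have heq : (fun k => b (idx k) (j k)) = fun k => a (idx k) (l k) := by
      funext k
      have hk : k ∈ S (idx k) := by simp [hS]
      set e := (S (idx k)).orderIsoOfFin rfl with he_def
      have h3 := hb3 (idx k) (e.symm ⟨k, hk⟩)
      rw [he_def] at h3
      rw [OrderIso.apply_symm_apply] at h3
      exact h3
    rw [heq] at hfin
    exact hfin
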